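/- Let K be a field and n ≥ 1, and let (E, F, G) be a transverse triple of complete flags in K^n. Suppose (e_1, …, e_n) and (e'_1, …, e'_n) are two bases of K^n such that for every 0 ≤ a ≤ n: E(a) = span(e_1, …, e_a) = span(e'_1, …, e'_a), F(a) = span(e_{n−a+1}, …, e_n) = span(e'_{n−a+1}, …, e'_n), and G(1) = span(e_1 + … + e_n) = span(e'_1 + … + e'_n). Then there exists a nonzero scalar c ∈ K with e'_i = c • e_i for all i = 1, …, n; i.e., a basis adapted to a transverse triple of flags is unique up to rescaling all basis vectors by a common nonzero scalar. -/

import Mathlib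

/-- A complete flag in `K^n`: a map assigning to each `a ∈ {0,…,n}` an `a`-dimensional
subspace, nested increasingly. -/
def IsCompleteFlag (K : Type*) [Field K] (n : ℕ) (E : ℕ → Submodule K (Fin n → K)) : Prop :=
  (∀ a, a ≤ n → Module.finrank K (E a) = a) ∧
  (∀ a b, a ≤ b → b ≤ n → E a ≤ E b)

/-- A basis adapted to a transverse triple of complete flags is unique up to rescaling
all basis vectors by a common nonzero scalar. -/
theorem adapted_basis_unique_up_to_common_scalar
    {K : Type*} [Field K] {n : ℕ} (hn : 1 ≤ n)
    (E F G : ℕ → Submodule K (Fin n → K))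
    (hE : IsCompleteFlag K n E) (hF : IsCompleteFlag K n F) (hG : IsCompleteFlag K n G)
    (htrans : ∀ a b c : ℕ, a + b + c = n → E a ⊔ F b ⊔ G c = ⊤)
    (e e' : Fin n → (Fin n → K))
    (he : LinearIndependent K e) (hespan : Submodule.span K (Set.range e) = ⊤)
    (he' : LinearIndependent K e') (he'span : Submodule.span K (Set.range e') = ⊤)
    (hEe : ∀ a, a ≤ n → E a = Submodule.span K (e '' {i : Fin n | (i : ℕ) < a}))
    (hEe' : ∀ a, a ≤ n → E a = Submodule.span K (e' '' {i : Fin n | (i : ℕ) < a}))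
    (hFe : ∀ a, a ≤ n → F a = Submodule.span K (e '' {i : Fin n | n - a ≤ (i : ℕ)}))
    (hFe' : ∀ a, a ≤ n → F a = Submodule.span K (e' '' {i : Fin n | n - a ≤ (i : ℕ)}))
    (hGe : G 1 = Submodule.span K ({∑ i, e i} : Set (Fin n → K)))
    (hGe' : G 1 = Submodule.span K ({∑ i, e' i} : Set (Fin n → K))) :
    ∃ c : K, c ≠ 0 ∧ ∀ i : Fin n, e' i = c • e i := by
  classical
  let b : Module.Basis (Fin n) K (Fin n → K) := Module.Basis.mk he (by rw [hespan])
  have hb : ∀ i, b i = e i := fun i => Module.Basis.mk_apply he _ i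
  set c : Fin n → K := fun i => b.repr (e' i) i with hc
  have key : ∀ i, e' i = c i • e i := by
    intro i
    have hi1 : (i : ℕ) + 1 ≤ n := i.isLt
    have h1 : e' i ∈ Submodule.span K (e '' {j : Fin n | (j : ℕ) < (i : ℕ) + 1}) := by
      rw [← hEe _ hi1, hEe' _ hi1]
      exact Submodule.subset_span ⟨i, by simp, rfl⟩
    have h2 : e' i ∈ Submodule.span K (e '' {j : Fin n | n - (n - (i : ℕ)) ≤ (j : ℕ)}) := by
      rw [← hFe _ (Nat.sub_le n i), hFe' _ (Nat.sub_le n i)]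
      exact Submodule.subset_span ⟨i, by simp only [Set.mem_setOf_eq]; omega, rfl⟩
    have hni : n - (n - (i : ℕ)) = i := Nat.sub_sub_self (le_of_lt i.isLt)
    -- rewrite spans in terms of b
    have hbimg : ∀ s : Set (Fin n), e '' s = b '' s := by
      intro s; apply Set.image_congr; intro j _; exact (hb j).symm
    rw [hbimg, Module.Basis.mem_span_image] at h1 h2
    have hsupp : ∀ j, j ≠ i → b.repr (e' i) j = 0 := by
      intro j hj
      by_contra hne
      have hjsupp : j ∈ (b.repr (e' i)).support := Finsupp.mem_support_iff.mpr hne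
      have hlt : (j : ℕ) < (i : ℕ) + 1 := h1 hjsupp
      have hge : (i : ℕ) ≤ (j : ℕ) := hni ▸ h2 hjsupp
      exact hj (Fin.ext (le_antisymm (Nat.lt_succ_iff.mp hlt) hge))
    have := b.sum_repr (e' i)
    rw [← this, Finset.sum_eq_single_of_mem i (Finset.mem_univ i)
      (fun j _ hj => by rw [hsupp j hj, zero_smul]), hb]
  -- now the sum condition
  have hsum : ∑ i, e' i ∈ Submodule.span K ({∑ i, e i} : Set (Fin n → K)) := by
    rw [← hGe, hGe']; exact Submodule.subset_span rfl
  obtain ⟨l, hl⟩ := Submodule.mem_span_singleton.mp hsum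
  have hcl : ∀ i, c i = l := by
    have hz : ∑ j, (c j - l) • e j = 0 := by
      have : ∑ j, c j • e j = ∑ j, l • e j := by
        rw [← Finset.smul_sum, hl]
        exact Finset.sum_congr rfl fun j _ => (key j).symm
      simp only [sub_smul, Finset.sum_sub_distrib, this, sub_self]
    intro i
    have := (Fintype.linearIndependent_iff.mp he) (fun j => c j - l) hz i
    exact sub_eq_zero.mp this
  have i0 : Fin n := ⟨0, hn⟩
  refine ⟨l, ?_, fun i => by rw [key i, hcl i]⟩
  intro hl0
  have := key i0
  rw [hcl i0, hl0, zero_smul] at this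
  exact he'.ne_zero i0 this
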